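/- Let n be a natural number, let μ ∈ ℍ be nonzero, and let f : ℍ → ℍ be the power function f(p) = pⁿ. Then for every q ∈ ℍ the left GHR derivatives satisfy (∂f/∂q^μ)(q)·μ = Σ_{m=1}^{n} q^{n−m}·Re(q^{m−1}·μ) and (∂f/∂q^{μ*})(q)·μ = −(1/2) Σ_{m=1}^{n} q^{n−m}·(q^{m−1}·μ)*, where Re(p) denotes the real (scalar) part of p embedded in ℍ. -/

import Mathlib

open Quaternion Filter Topology Asymptotics

noncomputable section

/-- The imaginary unit `i` of the real quaternions. -/
def qI : ℍ[ℝ] := ⟨0, 1, 0, 0⟩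
/-- The imaginary unit `j` of the real quaternions. -/
def qJ : ℍ[ℝ] := ⟨0, 0, 1, 0⟩
/-- The imaginary unit `k` of the real quaternions. -/
def qK : ℍ[ℝ] := ⟨0, 0, 0, 1⟩

/-- Quaternion rotation `p ↦ μ p μ⁻¹`. -/
def qRot (μ p : ℍ[ℝ]) : ℍ[ℝ] := μ * p * μ⁻¹

/-- The left GHR derivative `∂f/∂q^μ` at `q`. -/
def lD (f : ℍ[ℝ] → ℍ[ℝ]) (μ q : ℍ[ℝ]) : ℍ[ℝ] :=
  (4 : ℍ[ℝ])⁻¹ * (fderiv ℝ f q 1 - fderiv ℝ f q qI * qRot μ qI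
    - fderiv ℝ f q qJ * qRot μ qJ - fderiv ℝ f q qK * qRot μ qK)

/-- The left conjugate GHR derivative `∂f/∂q^{μ*}` at `q`. -/
def lDc (f : ℍ[ℝ] → ℍ[ℝ]) (μ q : ℍ[ℝ]) : ℍ[ℝ] :=
  (4 : ℍ[ℝ])⁻¹ * (fderiv ℝ f q 1 + fderiv ℝ f q qI * qRot μ qI
    + fderiv ℝ f q qJ * qRot μ qJ + fderiv ℝ f q qK * qRot μ qK)

/-- The right GHR derivative `∂ᵣf/∂q^μ` at `q`. -/
def rD (f : ℍ[ℝ] → ℍ[ℝ]) (μ q : ℍ[ℝ]) : ℍ[ℝ] :=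
  (4 : ℍ[ℝ])⁻¹ * (fderiv ℝ f q 1 - qRot μ qI * fderiv ℝ f q qI
    - qRot μ qJ * fderiv ℝ f q qJ - qRot μ qK * fderiv ℝ f q qK)

/-- The right conjugate GHR derivative `∂ᵣf/∂q^{μ*}` at `q`. -/
def rDc (f : ℍ[ℝ] → ℍ[ℝ]) (μ q : ℍ[ℝ]) : ℍ[ℝ] :=
  (4 : ℍ[ℝ])⁻¹ * (fderiv ℝ f q 1 + qRot μ qI * fderiv ℝ f q qI
    + qRot μ qJ * fderiv ℝ f q qJ + qRot μ qK * fderiv ℝ f q qK)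


section AuxLemmas

private lemma quat_pow_hasFDerivAt (n : ℕ) (q : ℍ[ℝ]) :
    HasFDerivAt (fun p : ℍ[ℝ] => p ^ n)
      (∑ k ∈ Finset.range n,
        ContinuousLinearMap.mulLeftRight ℝ ℍ[ℝ] (q ^ (n - 1 - k)) (q ^ k)) q := by
  induction n with
  | zero => simpa using hasFDerivAt_const (1 : ℍ[ℝ]) q
  | succ n ih =>
    have h := ih.mul' (hasFDerivAt_id q)
    simp only [id_eq] at h
    have heq : (fun y : ℍ[ℝ] => y ^ n * y) = fun y => y ^ (n+1) := by
      funext y; rw [pow_succ]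
    change HasFDerivAt (fun y : ℍ[ℝ] => y ^ n * y) _ q at h
    rw [heq] at h
    have hD : (∑ k ∈ Finset.range (n+1),
        ContinuousLinearMap.mulLeftRight ℝ ℍ[ℝ] (q ^ (n + 1 - 1 - k)) (q ^ k))
        = q ^ n • ContinuousLinearMap.id ℝ ℍ[ℝ] +
          MulOpposite.op q • (∑ k ∈ Finset.range n,
            ContinuousLinearMap.mulLeftRight ℝ ℍ[ℝ] (q ^ (n - 1 - k)) (q ^ k)) := by
      refine ContinuousLinearMap.ext fun v => ?_
      simp only [ContinuousLinearMap.sum_apply, ContinuousLinearMap.mulLeftRight_apply,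
        ContinuousLinearMap.add_apply, ContinuousLinearMap.smul_apply,
        ContinuousLinearMap.coe_id', id_eq, ContinuousLinearMap.smulRight_apply,
        ContinuousLinearMap.coe_sum', Finset.sum_apply, smul_eq_mul, op_smul_eq_mul]
      rw [Finset.sum_range_succ', Finset.sum_mul]
      simp only [Nat.add_sub_cancel, pow_zero, mul_one, Nat.sub_zero]
      rw [add_comm]
      congr 1
      refine Finset.sum_congr rfl fun k hk => ?_
      rw [show n - (k + 1) = n - 1 - k from by omega]
      simp [pow_succ, mul_assoc]
    rw [hD]
    exact h

private lemma quat_fderiv_pow (n : ℕ) (q v : ℍ[ℝ]) :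
    fderiv ℝ (fun p : ℍ[ℝ] => p ^ n) q v
      = ∑ m ∈ Finset.Icc 1 n, q ^ (n - m) * v * q ^ (m - 1) := by
  rw [(quat_pow_hasFDerivAt n q).fderiv]
  rw [← Finset.Ico_add_one_right_eq_Icc, Finset.sum_Ico_eq_sum_range]
  simp only [ContinuousLinearMap.sum_apply, ContinuousLinearMap.mulLeftRight_apply]
  refine Finset.sum_congr (by norm_num) fun k hk => ?_
  rw [show n - (1 + k) = n - 1 - k from by omega, show 1 + k - 1 = k from by omega]

private lemma quat_coe4 : (4:ℍ[ℝ])⁻¹ = (((4:ℝ)⁻¹:ℝ):ℍ[ℝ]) := by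
  rw [show (4:ℍ[ℝ]) = ((4:ℝ):ℍ[ℝ]) from by norm_cast, ← Quaternion.coe_inv]

private lemma quat_coe2 : (2:ℍ[ℝ])⁻¹ = (((2:ℝ)⁻¹:ℝ):ℍ[ℝ]) := by
  rw [show (2:ℍ[ℝ]) = ((2:ℝ):ℍ[ℝ]) from by norm_cast, ← Quaternion.coe_inv]

private lemma qI_re : qI.re = 0 := rfl
private lemma qI_imI : qI.imI = 1 := rfl
private lemma qI_imJ : qI.imJ = 0 := rfl
private lemma qI_imK : qI.imK = 0 := rfl
private lemma qJ_re : qJ.re = 0 := rfl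
private lemma qJ_imI : qJ.imI = 0 := rfl
private lemma qJ_imJ : qJ.imJ = 1 := rfl
private lemma qJ_imK : qJ.imK = 0 := rfl
private lemma qK_re : qK.re = 0 := rfl
private lemma qK_imI : qK.imI = 0 := rfl
private lemma qK_imJ : qK.imJ = 0 := rfl
private lemma qK_imK : qK.imK = 1 := rfl

set_option maxHeartbeats 1000000 in
private lemma quat_key1 (x y μ : ℍ[ℝ]) :
    (4:ℍ[ℝ])⁻¹ * (x * (y * μ) - x * (qI * (y * (μ * qI))) - x * (qJ * (y * (μ * qJ)))
      - x * (qK * (y * (μ * qK)))) = x * (((y * μ).re : ℝ) : ℍ[ℝ]) := by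
  rw [quat_coe4]
  ext <;> simp [-Quaternion.coe_inv, qI_re, qI_imI, qI_imJ, qI_imK, qJ_re, qJ_imI, qJ_imJ, qJ_imK, qK_re, qK_imI, qK_imJ, qK_imK, Quaternion.re_coe, Quaternion.imI_coe,
    Quaternion.imJ_coe, Quaternion.imK_coe] <;> ring

set_option maxHeartbeats 1000000 in
private lemma quat_key2 (x y μ : ℍ[ℝ]) :
    (4:ℍ[ℝ])⁻¹ * (x * (y * μ) + x * (qI * (y * (μ * qI))) + x * (qJ * (y * (μ * qJ)))
      + x * (qK * (y * (μ * qK)))) = -(2:ℍ[ℝ])⁻¹ * (x * star (y * μ)) := by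
  rw [quat_coe2, quat_coe4]
  ext <;> simp [-Quaternion.coe_inv, qI_re, qI_imI, qI_imJ, qI_imK, qJ_re, qJ_imI, qJ_imJ, qJ_imK, qK_re, qK_imI, qK_imJ, qK_imK, Quaternion.re_coe, Quaternion.imI_coe,
    Quaternion.imJ_coe, Quaternion.imK_coe, Quaternion.re_star, Quaternion.imI_star,
    Quaternion.imJ_star, Quaternion.imK_star] <;> ring

end AuxLemmas

set_option maxHeartbeats 2000000 in
theorem left_GHR_derivative_power_function
    (n : ℕ) (μ : ℍ[ℝ]) (hμ : μ ≠ 0) (q : ℍ[ℝ]) :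
    lD (fun p => p ^ n) μ q * μ
      = ∑ m ∈ Finset.Icc 1 n, q ^ (n - m) * (((q ^ (m - 1) * μ).re : ℝ) : ℍ[ℝ]) ∧
    lDc (fun p => p ^ n) μ q * μ
      = -(2 : ℍ[ℝ])⁻¹ * ∑ m ∈ Finset.Icc 1 n, q ^ (n - m) * star (q ^ (m - 1) * μ) := by
  constructor
  · rw [lD]
    simp only [qRot, quat_fderiv_pow, Finset.sum_mul]
    rw [← Finset.sum_sub_distrib, ← Finset.sum_sub_distrib, ← Finset.sum_sub_distrib,
      mul_assoc, Finset.sum_mul, Finset.mul_sum]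
    refine Finset.sum_congr rfl fun m hm => ?_
    simp only [mul_one, sub_mul, mul_assoc, inv_mul_cancel₀ hμ]
    exact quat_key1 _ _ _
  · rw [lDc]
    simp only [qRot, quat_fderiv_pow, Finset.sum_mul]
    rw [← Finset.sum_add_distrib, ← Finset.sum_add_distrib, ← Finset.sum_add_distrib,
      mul_assoc, Finset.sum_mul, Finset.mul_sum, Finset.mul_sum]
    refine Finset.sum_congr rfl fun m hm => ?_
    simp only [mul_one, add_mul, mul_assoc, inv_mul_cancel₀ hμ]
    exact quat_key2 _ _ _

end
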